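/- arXiv:1808.03169 — 6 statements merged into one kernel-verified Lean document; each statement's English description precedes it below -/
import Mathlib

section
/- Let Φ : X → Y be a homogeneous map between p-normed spaces satisfying the p-linearity estimate ‖Φ(∑ x_i) − ∑ Φ(x_i)‖ ≤ K (∑ ‖x_i‖^p)^(1/p) for all finite families. Define on Y × X the quasinorm ‖(y,x)‖_Φ = ‖y − Φ(x)‖ + ‖x‖. Then for any finite family (y_i, x_i) one has ‖∑ (y_i, x_i)‖_Φ ≤ (1 + K^p)^(1/p) · 2^(1/p − 1) · (∑ ‖(y_i, x_i)‖_Φ^p)^(1/p). -/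
open scoped BigOperators

private lemma aux_subadd (p : ℝ) (hp0 : 0 < p) (hp1 : p ≤ 1) {a b : ℝ}
    (ha : 0 ≤ a) (hb : 0 ≤ b) : (a + b) ^ p ≤ a ^ p + b ^ p := by
  lift a to NNReal using ha
  lift b to NNReal using hb
  have h := NNReal.rpow_add_le_add_rpow a b hp0.le hp1
  have h2 : ((a + b) ^ p : NNReal) ≤ ((a ^ p + b ^ p : NNReal)) := h
  calc ((a : ℝ) + b) ^ p = (((a + b : NNReal) : ℝ)) ^ p := by push_cast; ring_nf
    _ = (((a + b) ^ p : NNReal) : ℝ) := by rw [NNReal.coe_rpow]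
    _ ≤ (((a ^ p + b ^ p : NNReal)) : ℝ) := by exact_mod_cast h2
    _ = (a : ℝ) ^ p + (b : ℝ) ^ p := by push_cast [NNReal.coe_rpow]; ring

private lemma aux_one (p : ℝ) (hp0 : 0 < p) (hp1 : p ≤ 1) {a b : ℝ}
    (ha : 0 ≤ a) (hb : 0 ≤ b) : a + b ≤ (a ^ p + b ^ p) ^ (1 / p) := by
  have h1 : (a + b) ^ p ≤ a ^ p + b ^ p := aux_subadd p hp0 hp1 ha hb
  calc a + b = ((a + b) ^ p) ^ (1 / p) := by
        rw [← Real.rpow_mul (by positivity), mul_one_div, div_self hp0.ne', Real.rpow_one]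
    _ ≤ (a ^ p + b ^ p) ^ (1 / p) := Real.rpow_le_rpow (by positivity) h1 (by positivity)

private lemma aux_two' (p : ℝ) (hp0 : 0 < p) (hp1 : p ≤ 1) (a b : NNReal) :
    a ^ p + b ^ p ≤ 2 ^ (1 - p) * (a + b) ^ p := by
  have hq : 1 ≤ 1 / p := one_le_one_div hp0 hp1
  have h := NNReal.rpow_add_le_mul_rpow_add_rpow (a ^ p) (b ^ p) hq
  rw [← NNReal.rpow_mul, ← NNReal.rpow_mul, mul_one_div, div_self hp0.ne',
    NNReal.rpow_one, NNReal.rpow_one] at h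
  have h2 := NNReal.rpow_le_rpow h hp0.le
  rw [← NNReal.rpow_mul, one_div, inv_mul_cancel₀ hp0.ne', NNReal.rpow_one,
    NNReal.mul_rpow, ← NNReal.rpow_mul] at h2
  have he : (p⁻¹ - 1) * p = 1 - p := by field_simp
  rwa [he] at h2

private lemma aux_two (p : ℝ) (hp0 : 0 < p) (hp1 : p ≤ 1) {a b : ℝ}
    (ha : 0 ≤ a) (hb : 0 ≤ b) : a ^ p + b ^ p ≤ 2 ^ (1 - p) * (a + b) ^ p := by
  lift a to NNReal using ha
  lift b to NNReal using hb
  have h := aux_two' p hp0 hp1 a b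
  have h2 : ((a ^ p + b ^ p : NNReal) : ℝ) ≤ ((2 ^ (1 - p) * (a + b) ^ p : NNReal) : ℝ) := by
    exact_mod_cast h
  calc (a : ℝ) ^ p + (b : ℝ) ^ p = ((a ^ p + b ^ p : NNReal) : ℝ) := by
        push_cast [NNReal.coe_rpow]; ring
    _ ≤ ((2 ^ (1 - p) * (a + b) ^ p : NNReal) : ℝ) := h2
    _ = 2 ^ (1 - p) * ((a : ℝ) + b) ^ p := by push_cast [NNReal.coe_rpow]; ring

private lemma sum_pow_le {Z : Type*} [AddCommMonoid Z] (p : ℝ) (hp0 : 0 < p)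
    (N : Z → ℝ) (hzero : N 0 = 0)
    (hsub : ∀ a b, N (a + b) ^ p ≤ N a ^ p + N b ^ p) :
    ∀ (m : ℕ) (g : Fin m → Z), N (∑ i, g i) ^ p ≤ ∑ i, N (g i) ^ p := by
  intro m
  induction m with
  | zero => intro g; simp [hzero, Real.zero_rpow hp0.ne']
  | succ k ih =>
      intro g
      rw [Fin.sum_univ_succ, Fin.sum_univ_succ]
      exact (hsub _ _).trans (add_le_add le_rfl (ih fun i => g i.succ))

/-- If `Φ : X → Y` is homogeneous and `p`-linear with constant `K`, the quasinorm
`‖(y,x)‖_Φ = ‖y − Φ x‖ + ‖x‖` on `Y × X` satisfies the stated `p`-convexity estimate. -/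
theorem phiNorm_sum_le (p K : ℝ) (hp0 : 0 < p) (hp1 : p ≤ 1) (hK : 0 ≤ K)
    (X : Type*) [AddCommGroup X] [Module ℝ X]
    (Y : Type*) [AddCommGroup Y] [Module ℝ Y]
    (NX : X → ℝ) (NY : Y → ℝ)
    (hNX0 : ∀ x, 0 ≤ NX x) (hNXdef : ∀ x, NX x = 0 ↔ x = 0)
    (hNXhom : ∀ (c : ℝ) (x : X), NX (c • x) = |c| * NX x)
    (hNXp : ∀ x x', NX (x + x') ^ p ≤ NX x ^ p + NX x' ^ p)
    (hNY0 : ∀ y, 0 ≤ NY y) (hNYdef : ∀ y, NY y = 0 ↔ y = 0)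
    (hNYhom : ∀ (c : ℝ) (y : Y), NY (c • y) = |c| * NY y)
    (hNYp : ∀ y y', NY (y + y') ^ p ≤ NY y ^ p + NY y' ^ p)
    (Φ : X → Y)
    (hΦhom : ∀ (c : ℝ) (x : X), Φ (c • x) = c • Φ x)
    (hΦK : ∀ (n : ℕ) (x : Fin n → X),
      NY (Φ (∑ i, x i) - ∑ i, Φ (x i)) ≤ K * (∑ i, NX (x i) ^ p) ^ (1 / p))
    (n : ℕ) (z : Fin n → Y × X) :
    NY ((∑ i, z i).1 - Φ ((∑ i, z i).2)) + NX ((∑ i, z i).2) ≤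
      (1 + K ^ p) ^ (1 / p) * 2 ^ (1 / p - 1) *
        (∑ i, (NY ((z i).1 - Φ ((z i).2)) + NX ((z i).2)) ^ p) ^ (1 / p) := by
  set a : Fin n → ℝ := fun i => NY ((z i).1 - Φ ((z i).2)) with ha_def
  set b : Fin n → ℝ := fun i => NX ((z i).2) with hb_def
  set Sa : ℝ := ∑ i, a i ^ p with hSa_def
  set Sb : ℝ := ∑ i, b i ^ p with hSb_def
  set S : ℝ := ∑ i, (a i + b i) ^ p with hS_def
  have hSa0 : 0 ≤ Sa := Finset.sum_nonneg fun i _ => Real.rpow_nonneg (hNY0 _) p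
  have hSb0 : 0 ≤ Sb := Finset.sum_nonneg fun i _ => Real.rpow_nonneg (hNX0 _) p
  have hS0 : 0 ≤ S := Finset.sum_nonneg fun i _ =>
    Real.rpow_nonneg (add_nonneg (hNY0 _) (hNX0 _)) p
  have hKp0 : 0 ≤ K ^ p := Real.rpow_nonneg hK p
  have hNX00 : NX 0 = 0 := (hNXdef 0).2 rfl
  have hNY00 : NY 0 = 0 := (hNYdef 0).2 rfl
  -- the X component
  have hsnd : (∑ i, z i).2 = ∑ i, (z i).2 := by
    simp [Prod.snd_sum]
  have hB : NX ((∑ i, z i).2) ^ p ≤ Sb := by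
    rw [hsnd]
    exact sum_pow_le p hp0 NX hNX00 hNXp n (fun i => (z i).2)
  -- the Y component
  have hdecomp : (∑ i, z i).1 - Φ ((∑ i, z i).2) =
      (∑ i, ((z i).1 - Φ ((z i).2))) + (∑ i, Φ ((z i).2) - Φ (∑ i, (z i).2)) := by
    rw [hsnd, Prod.fst_sum, Finset.sum_sub_distrib]
    abel
  have hneg : NY (∑ i, Φ ((z i).2) - Φ (∑ i, (z i).2)) =
      NY (Φ (∑ i, (z i).2) - ∑ i, Φ ((z i).2)) := by
    have h := hNYhom (-1) (Φ (∑ i, (z i).2) - ∑ i, Φ ((z i).2))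
    rw [neg_one_smul] at h
    rw [← neg_sub (Φ (∑ i, (z i).2))]
    simpa using h
  have herr : NY (∑ i, Φ ((z i).2) - Φ (∑ i, (z i).2)) ^ p ≤ K ^ p * Sb := by
    have h1 : NY (∑ i, Φ ((z i).2) - Φ (∑ i, (z i).2)) ≤ K * Sb ^ (1 / p) := by
      rw [hneg]; exact hΦK n (fun i => (z i).2)
    have h2 := Real.rpow_le_rpow (hNY0 _) h1 hp0.le
    rwa [Real.mul_rpow hK (Real.rpow_nonneg hSb0 _), ← Real.rpow_mul hSb0,
      one_div, inv_mul_cancel₀ hp0.ne', Real.rpow_one] at h2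
  have hA : NY ((∑ i, z i).1 - Φ ((∑ i, z i).2)) ^ p ≤ Sa + K ^ p * Sb := by
    rw [hdecomp]
    refine (hNYp _ _).trans (add_le_add ?_ herr)
    exact sum_pow_le p hp0 NY hNY00 hNYp n (fun i => (z i).1 - Φ ((z i).2))
  -- combine
  have hstep1 : NY ((∑ i, z i).1 - Φ ((∑ i, z i).2)) + NX ((∑ i, z i).2) ≤
      (NY ((∑ i, z i).1 - Φ ((∑ i, z i).2)) ^ p + NX ((∑ i, z i).2) ^ p) ^ (1 / p) :=
    aux_one p hp0 hp1 (hNY0 _) (hNX0 _)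
  have hsum2 : Sa + Sb ≤ 2 ^ (1 - p) * S := by
    rw [hSa_def, hSb_def, hS_def, ← Finset.sum_add_distrib, Finset.mul_sum]
    exact Finset.sum_le_sum fun i _ => aux_two p hp0 hp1 (hNY0 _) (hNX0 _)
  have hstep2 : NY ((∑ i, z i).1 - Φ ((∑ i, z i).2)) ^ p + NX ((∑ i, z i).2) ^ p ≤
      (1 + K ^ p) * (2 ^ (1 - p) * S) := by
    have h3 : Sa + K ^ p * Sb + Sb ≤ (1 + K ^ p) * (Sa + Sb) := by nlinarith
    have h4 : (1 + K ^ p) * (Sa + Sb) ≤ (1 + K ^ p) * (2 ^ (1 - p) * S) := by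
      apply mul_le_mul_of_nonneg_left hsum2 (by linarith)
    linarith [add_le_add hA hB]
  have h2pos : (0:ℝ) ≤ 2 ^ (1 - p) := Real.rpow_nonneg (by norm_num) _
  have hfinal : ((1 + K ^ p) * (2 ^ (1 - p) * S)) ^ (1 / p) =
      (1 + K ^ p) ^ (1 / p) * 2 ^ (1 / p - 1) * S ^ (1 / p) := by
    rw [Real.mul_rpow (by linarith) (mul_nonneg h2pos hS0),
      Real.mul_rpow h2pos hS0, ← Real.rpow_mul (by norm_num : (0:ℝ) ≤ 2)]
    have he : (1 - p) * (1 / p) = 1 / p - 1 := by field_simp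
    rw [he, mul_assoc]
  calc NY ((∑ i, z i).1 - Φ ((∑ i, z i).2)) + NX ((∑ i, z i).2) ≤
      (NY ((∑ i, z i).1 - Φ ((∑ i, z i).2)) ^ p + NX ((∑ i, z i).2) ^ p) ^ (1 / p) := hstep1
    _ ≤ ((1 + K ^ p) * (2 ^ (1 - p) * S)) ^ (1 / p) :=
        Real.rpow_le_rpow (add_nonneg (Real.rpow_nonneg (hNY0 _) _) (Real.rpow_nonneg (hNX0 _) _)) hstep2 (by positivity)
    _ = (1 + K ^ p) ^ (1 / p) * 2 ^ (1 / p - 1) * S ^ (1 / p) := hfinal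
end

section
/- Let Φ : X → Y be a p-linear map with constant K and let H be a Hamel basis of X. Define L(x) = ∑_{h∈H} λ_h(x) Φ(h) where x = ∑_h λ_h(x) h, and Φ̃ = Φ − L. Then Φ̃ vanishes on H and for every x = ∑_h λ_h(x) h one has ‖Φ̃(x)‖ ≤ K (∑_h |λ_h(x)|^p ‖h‖^p)^(1/p). -/
open scoped BigOperators

/-- Given a `p`-linear map `Φ : X → Y` with constant `K` and a Hamel basis `b` of `X`,
the map `Φ̃ = Φ − L`, where `L x = ∑_h λ_h(x) Φ(b h)`, vanishes on the basis and
satisfies `‖Φ̃ x‖ ≤ K (∑_h |λ_h(x)|^p ‖b h‖^p)^(1/p)`. -/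
theorem tilde_phi_estimate (p K : ℝ) (hp0 : 0 < p) (hp1 : p ≤ 1) (hK : 0 ≤ K)
    (X : Type*) [AddCommGroup X] [Module ℝ X]
    (Y : Type*) [AddCommGroup Y] [Module ℝ Y]
    (NX : X → ℝ) (NY : Y → ℝ)
    (hNX0 : ∀ x, 0 ≤ NX x) (hNXdef : ∀ x, NX x = 0 ↔ x = 0)
    (hNXhom : ∀ (c : ℝ) (x : X), NX (c • x) = |c| * NX x)
    (hNXp : ∀ x x', NX (x + x') ^ p ≤ NX x ^ p + NX x' ^ p)
    (hNY0 : ∀ y, 0 ≤ NY y) (hNYdef : ∀ y, NY y = 0 ↔ y = 0)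
    (hNYhom : ∀ (c : ℝ) (y : Y), NY (c • y) = |c| * NY y)
    (hNYp : ∀ y y', NY (y + y') ^ p ≤ NY y ^ p + NY y' ^ p)
    (Φ : X → Y)
    (hΦhom : ∀ (c : ℝ) (x : X), Φ (c • x) = c • Φ x)
    (hΦK : ∀ (n : ℕ) (x : Fin n → X),
      NY (Φ (∑ i, x i) - ∑ i, Φ (x i)) ≤ K * (∑ i, NX (x i) ^ p) ^ (1 / p))
    (ι : Type*) (b : Module.Basis ι ℝ X) :
    (∀ i : ι,
      Φ (b i) - ((b.repr (b i)).sum fun h c => c • Φ (b h)) = 0) ∧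
    (∀ x : X,
      NY (Φ x - ((b.repr x).sum fun h c => c • Φ (b h))) ≤
        K * (((b.repr x).sum fun h c => |c| ^ p * NX (b h) ^ p) ^ (1 / p))) := by
  -- finset version of hΦK
  have hfin : ∀ {κ : Type _} (s : Finset κ) (f : κ → X),
      NY (Φ (∑ i ∈ s, f i) - ∑ i ∈ s, Φ (f i)) ≤ K * (∑ i ∈ s, NX (f i) ^ p) ^ (1 / p) := by
    intro κ s f
    have e : Fin s.card ≃ {x // x ∈ s} := s.equivFin.symm
    have h := hΦK s.card (fun j => f (e j))
    have h1 : ∑ j, f (e j) = ∑ i ∈ s, f i := by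
      rw [← Finset.sum_coe_sort s f]
      exact Equiv.sum_comp e (fun i : {x // x ∈ s} => f i)
    have h2 : ∑ j, Φ (f (e j)) = ∑ i ∈ s, Φ (f i) := by
      rw [← Finset.sum_coe_sort s (fun i => Φ (f i))]
      exact Equiv.sum_comp e (fun i : {x // x ∈ s} => Φ (f i))
    have h3 : ∑ j, NX (f (e j)) ^ p = ∑ i ∈ s, NX (f i) ^ p := by
      rw [← Finset.sum_coe_sort s (fun i => NX (f i) ^ p)]
      exact Equiv.sum_comp e (fun i : {x // x ∈ s} => NX (f i) ^ p)
    rwa [h1, h2, h3] at h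
  constructor
  · intro i
    rw [b.repr_self i, Finsupp.sum_single_index (by simp)]
    simp
  · intro x
    set s := (b.repr x).support with hs
    have hx : x = ∑ h ∈ s, (b.repr x) h • b h := by
      conv_lhs => rw [← b.linearCombination_repr x]
      rfl
    have key := hfin s (fun h => (b.repr x) h • b h)
    rw [← hx] at key
    have hsum : ((b.repr x).sum fun h c => c • Φ (b h)) =
        ∑ h ∈ s, Φ ((b.repr x) h • b h) := by
      rw [Finsupp.sum]
      exact Finset.sum_congr rfl fun h _ => (hΦhom _ _).symm
    have hrhs : ((b.repr x).sum fun h c => |c| ^ p * NX (b h) ^ p) =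
        ∑ h ∈ s, NX ((b.repr x) h • b h) ^ p := by
      rw [Finsupp.sum]
      refine Finset.sum_congr rfl fun h _ => ?_
      rw [hNXhom, Real.mul_rpow (abs_nonneg _) (hNX0 _)]
    rw [hsum, hrhs]
    exact key
end

section
/- Greedy decomposition lemma: let F be a finite-dimensional p-normed space, 0 < p ≤ 1, δ ∈ (0,1), and let f_1, …, f_n be a δ-net in the unit sphere S of F. Then every f ∈ S can be written as f = ∑_{i=1}^n c_i f_i with scalars c_i satisfying (∑ |c_i|^p)^(1/p) ≤ (1 − δ^p)^(−1/p). -/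
open scoped BigOperators
open Filter Topology

private lemma aux_rpow_add_le {p : ℝ} (hp : 0 ≤ p) (hp1 : p ≤ 1) {a b : ℝ}
    (ha : 0 ≤ a) (hb : 0 ≤ b) : (a + b) ^ p ≤ a ^ p + b ^ p := by
  have h := NNReal.coe_le_coe.2 (NNReal.rpow_add_le_add_rpow a.toNNReal b.toNNReal hp hp1)
  push_cast at h
  rwa [Real.coe_toNNReal a ha, Real.coe_toNNReal b hb] at h

private lemma aux_sum_rpow {p : ℝ} (hp : 0 < p) (hp1 : p ≤ 1) {ι : Type*} (s : Finset ι)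
    (a : ι → ℝ) (ha : ∀ i, 0 ≤ a i) : (∑ i ∈ s, a i) ^ p ≤ ∑ i ∈ s, a i ^ p := by
  classical
  induction s using Finset.induction with
  | empty => simp [Real.zero_rpow hp.ne']
  | insert _ _ hx ih =>
    rename_i i s
    rw [Finset.sum_insert hx, Finset.sum_insert hx]
    calc (a i + ∑ j ∈ s, a j) ^ p ≤ a i ^ p + (∑ j ∈ s, a j) ^ p :=
          aux_rpow_add_le hp.le hp1 (ha i) (Finset.sum_nonneg fun j _ => ha j)
      _ ≤ a i ^ p + ∑ j ∈ s, a j ^ p := by linarith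

/-- Greedy decomposition: if `f₁,…,f_n` is a `δ`-net of the unit sphere of a
finite-dimensional `p`-normed space `F`, then every unit vector `f` can be written as
`f = ∑ c_i f_i` with `(∑ |c_i|^p)^(1/p) ≤ (1 − δ^p)^(−1/p)`. -/
theorem greedy_decomposition (p δ : ℝ) (hp0 : 0 < p) (hp1 : p ≤ 1)
    (hδ0 : 0 < δ) (hδ1 : δ < 1)
    (F : Type*) [AddCommGroup F] [Module ℝ F] [FiniteDimensional ℝ F]
    (N : F → ℝ)
    (hN0 : ∀ x, 0 ≤ N x) (hNdef : ∀ x, N x = 0 ↔ x = 0)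
    (hNhom : ∀ (c : ℝ) (x : F), N (c • x) = |c| * N x)
    (hNp : ∀ x y, N (x + y) ^ p ≤ N x ^ p + N y ^ p)
    (n : ℕ) (f : Fin n → F)
    (hfS : ∀ i, N (f i) = 1)
    (hnet : ∀ g : F, N g = 1 → ∃ i, N (g - f i) < δ) :
    ∀ g : F, N g = 1 →
      ∃ c : Fin n → ℝ, g = ∑ i, c i • f i ∧
        (∑ i, |c i| ^ p) ^ (1 / p) ≤ (1 - δ ^ p) ^ (-(1 / p)) := by
  intro g hg
  classical
  have hN0' : N 0 = 0 := (hNdef 0).mpr rfl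
  have hδp1 : δ ^ p < 1 := Real.rpow_lt_one hδ0.le hδ1 hp0
  have hδpp : 0 < δ ^ p := Real.rpow_pos_of_pos hδ0 p
  set C : ℝ := (1 - δ ^ p)⁻¹ with hC
  have hCpos : 0 < C := inv_pos.2 (by linarith)
  obtain ⟨i₀, _⟩ := hnet g hg
  have hNpos : ∀ x : F, x ≠ 0 → 0 < N x := fun x hx =>
    lt_of_le_of_ne (hN0 x) (fun h => hx ((hNdef x).1 h.symm))
  have unit : ∀ x : F, x ≠ 0 → N ((N x)⁻¹ • x) = 1 := by
    intro x hx
    have hNx := hNpos x hx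
    rw [hNhom, abs_inv, abs_of_pos hNx, inv_mul_cancel₀ hNx.ne']
  let step : F → Fin n := fun x => if h : x ≠ 0 then (hnet _ (unit x h)).choose else i₀
  have hstep : ∀ x : F, N (x - N x • f (step x)) ≤ δ * N x := by
    intro x
    by_cases hx : x = 0
    · subst hx
      simp [hN0']
    · have hNx := hNpos x hx
      have hch : N ((N x)⁻¹ • x - f (step x)) < δ := by
        have : step x = (hnet _ (unit x hx)).choose := dif_pos hx
        rw [this]
        exact (hnet _ (unit x hx)).choose_spec
      have heq : x - N x • f (step x) = N x • ((N x)⁻¹ • x - f (step x)) := by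
        rw [smul_sub, smul_smul, mul_inv_cancel₀ hNx.ne', one_smul]
      rw [heq, hNhom, abs_of_pos hNx, mul_comm]
      exact mul_le_mul_of_nonneg_right hch.le hNx.le
  -- greedy sequence
  let r : ℕ → F := fun k => Nat.rec g (fun _ x => x - N x • f (step x)) k
  have hr0 : r 0 = g := rfl
  have hrS : ∀ k, r (k + 1) = r k - N (r k) • f (step (r k)) := fun k => rfl
  have hrN : ∀ k, N (r k) ≤ δ ^ k := by
    intro k
    induction k with
    | zero => simpa [hr0] using hg.le
    | succ k ih =>
      calc N (r (k + 1)) ≤ δ * N (r k) := by rw [hrS]; exact hstep _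
        _ ≤ δ * δ ^ k := mul_le_mul_of_nonneg_left ih hδ0.le
        _ = δ ^ (k + 1) := (pow_succ' δ k).symm
  have hrsum : ∀ k, g - r k = ∑ j ∈ Finset.range k, N (r j) • f (step (r j)) := by
    intro k
    induction k with
    | zero => simp [hr0]
    | succ k ih =>
      rw [Finset.sum_range_succ, ← ih, hrS]
      abel
  -- coefficients at stage k
  let c : ℕ → Fin n → ℝ := fun k i =>
    ∑ j ∈ Finset.range k, if step (r j) = i then N (r j) else 0
  have hcsum : ∀ k, ∑ i, c k i • f i = g - r k := by
    intro k
    rw [hrsum]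
    calc ∑ i, c k i • f i
        = ∑ i, ∑ j ∈ Finset.range k,
            (if step (r j) = i then N (r j) else 0) • f i := by
          simp only [c, Finset.sum_smul]
      _ = ∑ j ∈ Finset.range k, ∑ i,
            (if step (r j) = i then N (r j) else 0) • f i := Finset.sum_comm
      _ = ∑ j ∈ Finset.range k, N (r j) • f (step (r j)) := by
          refine Finset.sum_congr rfl fun j _ => ?_
          simp [ite_smul]
  have hcnn : ∀ k i, 0 ≤ c k i := fun k i =>
    Finset.sum_nonneg fun j _ => by split <;> simp [hN0 _]
  have hcbound : ∀ k, ∑ i, |c k i| ^ p ≤ C := by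
    intro k
    have h1 : ∀ i, |c k i| ^ p ≤
        ∑ j ∈ Finset.range k, (if step (r j) = i then N (r j) ^ p else 0) := by
      intro i
      rw [abs_of_nonneg (hcnn k i)]
      refine le_trans (aux_sum_rpow hp0 hp1 _ _ (fun j => by split <;> simp [hN0 _])) ?_
      refine le_of_eq (Finset.sum_congr rfl fun j _ => ?_)
      split <;> simp [Real.zero_rpow hp0.ne']
    calc ∑ i, |c k i| ^ p
        ≤ ∑ i, ∑ j ∈ Finset.range k, (if step (r j) = i then N (r j) ^ p else 0) :=
          Finset.sum_le_sum fun i _ => h1 i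
      _ = ∑ j ∈ Finset.range k, ∑ i, (if step (r j) = i then N (r j) ^ p else 0) :=
          Finset.sum_comm
      _ = ∑ j ∈ Finset.range k, N (r j) ^ p := by simp
      _ ≤ ∑ j ∈ Finset.range k, (δ ^ p) ^ j := by
          refine Finset.sum_le_sum fun j _ => ?_
          calc N (r j) ^ p ≤ (δ ^ j) ^ p := Real.rpow_le_rpow (hN0 _) (hrN j) hp0.le
            _ = (δ ^ p) ^ j := by
                rw [← Real.rpow_natCast δ j, ← Real.rpow_mul hδ0.le, mul_comm,
                  Real.rpow_mul hδ0.le, Real.rpow_natCast]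
      _ ≤ C := by
          rw [geom_sum_eq hδp1.ne, ← neg_div_neg_eq, neg_sub, neg_sub, div_eq_mul_inv, hC]
          exact mul_le_of_le_one_left (le_of_lt hCpos)
            (by linarith [pow_nonneg hδpp.le k])
  -- coordinates
  have hgne : g ≠ 0 := fun h => by rw [h, hN0'] at hg; norm_num at hg
  haveI : Nontrivial F := ⟨g, 0, hgne⟩
  set d := Module.finrank ℝ F with hd
  let b : Module.Basis (Fin d) ℝ F := Module.finBasis ℝ F
  let e : F ≃ₗ[ℝ] (Fin d → ℝ) := b.equivFun
  let M : (Fin d → ℝ) → ℝ := fun x => N (e.symm x)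
  have hMrepr : ∀ z : Fin d → ℝ, e.symm z = ∑ i, z i • b i := fun z => b.equivFun_symm_apply z
  have hMle : ∀ z : Fin d → ℝ, M z ^ p ≤ ∑ i, |z i| ^ p * N (b i) ^ p := by
    intro z
    have hsum : ∀ (s : Finset (Fin d)) (v : Fin d → F),
        N (∑ j ∈ s, v j) ^ p ≤ ∑ j ∈ s, N (v j) ^ p := by
      intro s v
      induction s using Finset.induction with
      | empty => simp [hN0', Real.zero_rpow hp0.ne']
      | insert _ _ hx ih =>
        rename_i i s
        rw [Finset.sum_insert hx, Finset.sum_insert hx]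
        exact le_trans (hNp _ _) (by linarith)
    have h := hsum Finset.univ (fun i => z i • b i)
    rw [show M z = N (∑ i, z i • b i) by rw [← hMrepr]]
    refine le_trans h (le_of_eq (Finset.sum_congr rfl fun i _ => ?_))
    rw [hNhom, Real.mul_rpow (abs_nonneg _) (hN0 _)]
  have hMdiff : ∀ x y : Fin d → ℝ, |M x ^ p - M y ^ p| ≤ ∑ i, |x i - y i| ^ p * N (b i) ^ p := by
    intro x y
    have hMsub : ∀ u v : Fin d → ℝ, M u ^ p ≤ M v ^ p + M (u - v) ^ p := by
      intro u v
      have h : e.symm u = e.symm v + e.symm (u - v) := by rw [← map_add]; congr 1; abel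
      calc M u ^ p = N (e.symm v + e.symm (u - v)) ^ p := by
            rw [show M u = N (e.symm u) from rfl, h]
        _ ≤ N (e.symm v) ^ p + N (e.symm (u - v)) ^ p := hNp _ _
        _ = M v ^ p + M (u - v) ^ p := rfl
    have hsym : M (y - x) = M (x - y) := by
      show N (e.symm (y - x)) = N (e.symm (x - y))
      rw [show y - x = (-1 : ℝ) • (x - y) by ext i; simp, map_smul, hNhom]
      norm_num
    have hxy := hMle (x - y)
    simp only [Pi.sub_apply] at hxy
    rw [abs_sub_le_iff]
    constructor
    · linarith [hMsub x y]
    · have h := hMsub y x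
      rw [hsym] at h
      linarith
  have hGcont : Continuous fun z : Fin d → ℝ => ∑ i, |z i| ^ p * N (b i) ^ p :=
    continuous_finset_sum _ fun i _ =>
      (((continuous_abs.comp (continuous_apply i)).rpow_const fun z => Or.inr hp0.le).mul
        continuous_const)
  have hMpcont : Continuous fun x : Fin d → ℝ => M x ^ p := by
    rw [continuous_iff_continuousAt]
    intro y
    rw [ContinuousAt, tendsto_iff_dist_tendsto_zero]
    have h0 : Tendsto (fun x : Fin d → ℝ => ∑ i, |x i - y i| ^ p * N (b i) ^ p) (𝓝 y) (𝓝 0) := by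
      have h1 : Tendsto (fun x : Fin d → ℝ => x - y) (𝓝 y) (𝓝 0) := by
        simpa using (continuous_sub_right y).tendsto y
      have h2 := (hGcont.tendsto 0).comp h1
      simpa [Real.zero_rpow hp0.ne', Function.comp_def] using h2
    refine squeeze_zero (fun x => dist_nonneg) (fun x => ?_) h0
    rw [Real.dist_eq]
    exact hMdiff x y
  haveI : Nontrivial (Fin d → ℝ) := by
    have hdpos : 0 < d := Module.finrank_pos
    exact ⟨(fun _ => 0), (fun _ => 1), fun h => by
      have := congrFun h ⟨0, hdpos⟩; norm_num at this⟩
  obtain ⟨x₀, hx₀s, hx₀min⟩ := (isCompact_sphere (0 : Fin d → ℝ) 1).exists_isMinOn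
    (NormedSpace.sphere_nonempty.2 zero_le_one) hMpcont.continuousOn
  set m : ℝ := M x₀ ^ p with hm
  have hx₀ne : x₀ ≠ 0 := by
    intro h
    rw [h] at hx₀s
    simp at hx₀s
  have hmpos : 0 < m :=
    Real.rpow_pos_of_pos (hNpos _ (fun h => hx₀ne (by simpa using e.symm.map_eq_zero_iff.mp h))) p
  have hcoerc : ∀ z : Fin d → ℝ, m * ‖z‖ ^ p ≤ M z ^ p := by
    intro z
    by_cases hz : z = 0
    · have : M 0 = 0 := by
        rw [show M 0 = N (e.symm 0) from rfl, map_zero, hN0']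
      simp [hz, this, Real.zero_rpow hp0.ne']
    · have hnz : 0 < ‖z‖ := norm_pos_iff.2 hz
      have hu : (‖z‖⁻¹ • z) ∈ Metric.sphere (0 : Fin d → ℝ) 1 := by
        simp [norm_smul, abs_of_pos (inv_pos.2 hnz), inv_mul_cancel₀ hnz.ne']
      have hmin : m ≤ M (‖z‖⁻¹ • z) ^ p := hx₀min hu
      have hMz : M z = ‖z‖ * M (‖z‖⁻¹ • z) := by
        have hzz : z = ‖z‖ • (‖z‖⁻¹ • z) := by
          rw [smul_smul, mul_inv_cancel₀ hnz.ne', one_smul]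
        calc M z = N (e.symm (‖z‖ • (‖z‖⁻¹ • z))) := by rw [← hzz]
          _ = ‖z‖ * M (‖z‖⁻¹ • z) := by rw [map_smul, hNhom, abs_of_pos hnz]
      rw [hMz, Real.mul_rpow hnz.le (hN0 _)]
      nlinarith [Real.rpow_nonneg hnz.le p]
  -- convergence
  have htend0 : Tendsto (fun k => e (r k)) atTop (𝓝 0) := by
    have hbnd : ∀ k, ‖e (r k)‖ ≤ (m⁻¹) ^ (1 / p) * δ ^ k := by
      intro k
      have h1 : m * ‖e (r k)‖ ^ p ≤ (δ ^ k) ^ p := by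
        refine le_trans (hcoerc (e (r k))) ?_
        rw [show M (e (r k)) = N (r k) by
          rw [show M (e (r k)) = N (e.symm (e (r k))) from rfl, e.symm_apply_apply]]
        exact Real.rpow_le_rpow (hN0 _) (hrN k) hp0.le
      have h2 : ‖e (r k)‖ ^ p ≤ m⁻¹ * (δ ^ k) ^ p := by
        rw [inv_mul_eq_div, le_div_iff₀ hmpos]
        nlinarith
      calc ‖e (r k)‖ = (‖e (r k)‖ ^ p) ^ (1 / p) := by
            rw [← Real.rpow_mul (norm_nonneg _), mul_one_div_cancel hp0.ne', Real.rpow_one]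
        _ ≤ (m⁻¹ * (δ ^ k) ^ p) ^ (1 / p) :=
            Real.rpow_le_rpow (Real.rpow_nonneg (norm_nonneg _) _) h2 (by positivity)
        _ = (m⁻¹) ^ (1 / p) * δ ^ k := by
            rw [Real.mul_rpow (inv_nonneg.2 hmpos.le)
                (Real.rpow_nonneg (pow_nonneg hδ0.le k) _),
              ← Real.rpow_mul (pow_nonneg hδ0.le k), mul_one_div_cancel hp0.ne', Real.rpow_one]
    have hlim : Tendsto (fun k : ℕ => (m⁻¹) ^ (1 / p) * δ ^ k) atTop (𝓝 0) := by
      have h := (tendsto_pow_atTop_nhds_zero_of_lt_one hδ0.le hδ1).const_mul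
        ((m⁻¹ : ℝ) ^ (1 / p))
      simpa using h
    exact squeeze_zero_norm hbnd hlim
  have htend : Tendsto (fun k => e g - e (r k)) atTop (𝓝 (e g)) := by
    simpa using (tendsto_const_nhds (x := e g) (f := atTop)).sub htend0
  -- compactness
  let T : (Fin n → ℝ) → (Fin d → ℝ) := fun w => ∑ i, w i • e (f i)
  have hTcont : Continuous T :=
    continuous_finset_sum _ fun i _ => (continuous_apply i).smul continuous_const
  let B : Set (Fin n → ℝ) := {w | ∑ i, |w i| ^ p ≤ C}
  have hBclosed : IsClosed B := isClosed_le (continuous_finset_sum _ fun i _ =>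
    ((continuous_abs.comp (continuous_apply i)).rpow_const fun z => Or.inr hp0.le))
    continuous_const
  have hBbdd : Bornology.IsBounded B := by
    rw [isBounded_iff_forall_norm_le]
    refine ⟨C ^ (1 / p), fun w hw => ?_⟩
    rw [pi_norm_le_iff_of_nonneg (Real.rpow_nonneg hCpos.le _)]
    intro i
    have h1 : |w i| ^ p ≤ C := le_trans (Finset.single_le_sum (f := fun j => |w j| ^ p)
      (fun j _ => Real.rpow_nonneg (abs_nonneg _) p) (Finset.mem_univ i)) hw
    calc ‖w i‖ = (|w i| ^ p) ^ (1 / p) := by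
          rw [← Real.rpow_mul (abs_nonneg _), mul_one_div_cancel hp0.ne', Real.rpow_one]
          rfl
      _ ≤ C ^ (1 / p) :=
          Real.rpow_le_rpow (Real.rpow_nonneg (abs_nonneg _) _) h1 (by positivity)
  have hmem : e g ∈ T '' B := by
    refine ((Metric.isCompact_of_isClosed_isBounded hBclosed
      hBbdd).image hTcont).isClosed.mem_of_tendsto htend (Filter.Eventually.of_forall fun k => ?_)
    refine ⟨c k, hcbound k, ?_⟩
    have hT : T (c k) = e (∑ i, c k i • f i) := by
      rw [map_sum]
      simp only [map_smul]
      rfl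
    rw [hT, hcsum k, map_sub]
  obtain ⟨w, hwB, hwT⟩ := hmem
  refine ⟨w, ?_, ?_⟩
  · apply e.injective
    rw [← hwT, map_sum]
    simp only [map_smul]
    rfl
  · have heq : C ^ (1 / p) = (1 - δ ^ p) ^ (-(1 / p)) := by
      rw [hC, Real.inv_rpow (by linarith), ← Real.rpow_neg (by linarith)]
    rw [← heq]
    exact Real.rpow_le_rpow
      (Finset.sum_nonneg fun i _ => Real.rpow_nonneg (abs_nonneg _) _) hwB (by positivity)
end

section
/- Correction of the bound: let u^♭ : E → F and u^♯ : F → E be operators between p-normed spaces with u^♯ ∘ u^♭ = id_E and max(‖u^♭‖, ‖u^♯‖) ≤ 1+ε. Define a new p-norm on F by |f| = inf { (‖x‖^p + (1+ε)^p ‖g‖^p)^(1/p) : f = u^♭(x) + g, x ∈ E, g ∈ F }. Then (1+ε)^(−1)‖f‖ ≤ |f| ≤ (1+ε)‖f‖ for all f ∈ F, |u^♭(x)| = ‖x‖ for all x ∈ E, and ‖u^♯(f)‖ ≤ |f| for all f ∈ F. -/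
open scoped BigOperators

/-- The corrected `p`-norm `|f| = inf {(‖x‖^p + (1+ε)^p ‖g‖^p)^(1/p) : f = u♭ x + g}`. -/
noncomputable def corrNorm {E F : Type*} [AddCommGroup E] [Module ℝ E]
    [AddCommGroup F] [Module ℝ F]
    (NE : E → ℝ) (NF : F → ℝ) (ub : E →ₗ[ℝ] F) (p ε : ℝ) (f : F) : ℝ :=
  sInf {r : ℝ | ∃ x : E, ∃ g : F,
    f = ub x + g ∧ r = (NE x ^ p + (1 + ε) ^ p * NF g ^ p) ^ (1 / p)}

/-- Correction of the bound: renorming `F` by `corrNorm` makes the pair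
`⟨u♭, u♯⟩` contractive, the new `p`-norm being `(1+ε)`-equivalent to the old one. -/
theorem correction_of_the_bound (p ε : ℝ) (hp0 : 0 < p) (hp1 : p ≤ 1) (hε : 0 < ε)
    (E : Type*) [AddCommGroup E] [Module ℝ E]
    (F : Type*) [AddCommGroup F] [Module ℝ F]
    (NE : E → ℝ) (NF : F → ℝ)
    (hNE0 : ∀ x, 0 ≤ NE x) (hNEdef : ∀ x, NE x = 0 ↔ x = 0)
    (hNEhom : ∀ (c : ℝ) (x : E), NE (c • x) = |c| * NE x)
    (hNEp : ∀ x y, NE (x + y) ^ p ≤ NE x ^ p + NE y ^ p)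
    (hNF0 : ∀ f, 0 ≤ NF f) (hNFdef : ∀ f, NF f = 0 ↔ f = 0)
    (hNFhom : ∀ (c : ℝ) (f : F), NF (c • f) = |c| * NF f)
    (hNFp : ∀ f g, NF (f + g) ^ p ≤ NF f ^ p + NF g ^ p)
    (ub : E →ₗ[ℝ] F) (us : F →ₗ[ℝ] E)
    (hpair : ∀ x : E, us (ub x) = x)
    (hub : ∀ x : E, NF (ub x) ≤ (1 + ε) * NE x)
    (hus : ∀ f : F, NE (us f) ≤ (1 + ε) * NF f) :
    (∀ f : F, (1 + ε)⁻¹ * NF f ≤ corrNorm NE NF ub p ε f ∧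
      corrNorm NE NF ub p ε f ≤ (1 + ε) * NF f) ∧
    (∀ x : E, corrNorm NE NF ub p ε (ub x) = NE x) ∧
    (∀ f : F, NE (us f) ≤ corrNorm NE NF ub p ε f) := by
  have h1 : (0:ℝ) < 1 + ε := by linarith
  have h1' : (1:ℝ) ≤ 1 + ε := by linarith
  have hpne : p ≠ 0 := hp0.ne'
  have key : ∀ a : ℝ, 0 ≤ a → (a ^ p) ^ (1/p) = a := fun a ha => by
    rw [one_div, Real.rpow_rpow_inv ha hpne]
  have key' : ∀ a : ℝ, 0 ≤ a → (a ^ (1/p)) ^ p = a := fun a ha => by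
    rw [one_div, Real.rpow_inv_rpow ha hpne]
  -- the set
  set S : F → Set ℝ := fun f => {r : ℝ | ∃ x : E, ∃ g : F,
    f = ub x + g ∧ r = (NE x ^ p + (1 + ε) ^ p * NF g ^ p) ^ (1 / p)} with hSdef
  have hSne : ∀ f : F, ((1 + ε) * NF f) ∈ S f := by
    intro f
    refine ⟨0, f, by simp, ?_⟩
    rw [(hNEdef 0).mpr rfl, Real.zero_rpow hpne, zero_add,
      ← Real.mul_rpow h1.le (hNF0 f), key _ (mul_nonneg h1.le (hNF0 f))]
  have hnn : ∀ (x : E) (g : F), (0:ℝ) ≤ NE x ^ p + (1 + ε) ^ p * NF g ^ p :=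
    fun x g => add_nonneg (Real.rpow_nonneg (hNE0 x) p)
      (mul_nonneg (Real.rpow_nonneg h1.le p) (Real.rpow_nonneg (hNF0 g) p))
  have hbdd : ∀ f : F, BddBelow (S f) := by
    intro f
    refine ⟨0, ?_⟩
    rintro r ⟨x, g, -, rfl⟩
    exact Real.rpow_nonneg (hnn x g) _
  have hlow : ∀ (f : F) (r : ℝ), r ∈ S f →
      NE (us f) ≤ r ∧ (1 + ε)⁻¹ * NF f ≤ r := by
    rintro f r ⟨x, g, hfg, rfl⟩
    have hinner : (0:ℝ) ≤ NE x ^ p + (1 + ε) ^ p * NF g ^ p := hnn x g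
    have hr0 : (0:ℝ) ≤ (NE x ^ p + (1 + ε) ^ p * NF g ^ p) ^ (1/p) := Real.rpow_nonneg hinner _
    have hge1 : (1:ℝ) ≤ (1 + ε) ^ p := Real.one_le_rpow h1' hp0.le
    constructor
    · have husf : us f = x + us g := by rw [hfg, map_add, hpair]
      have h2 : NE (us f) ^ p ≤ NE x ^ p + (1 + ε) ^ p * NF g ^ p := by
        rw [husf]
        refine (hNEp x (us g)).trans (add_le_add_right ?_ _)
        calc NE (us g) ^ p ≤ ((1 + ε) * NF g) ^ p :=
              Real.rpow_le_rpow (hNE0 _) (hus g) hp0.le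
          _ = (1 + ε) ^ p * NF g ^ p := Real.mul_rpow h1.le (hNF0 g)
      calc NE (us f) = (NE (us f) ^ p) ^ (1/p) := (key _ (hNE0 _)).symm
        _ ≤ (NE x ^ p + (1 + ε) ^ p * NF g ^ p) ^ (1/p) :=
            Real.rpow_le_rpow (Real.rpow_nonneg (hNE0 _) p) h2 (by positivity)
    · -- show NF f ≤ (1+ε) * r
      have h3 : NF f ^ p ≤ (1 + ε) ^ p * (NE x ^ p + (1 + ε) ^ p * NF g ^ p) := by
        rw [hfg]
        refine (hNFp (ub x) g).trans ?_
        have h4 : NF (ub x) ^ p ≤ (1 + ε) ^ p * NE x ^ p := by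
          calc NF (ub x) ^ p ≤ ((1 + ε) * NE x) ^ p :=
                Real.rpow_le_rpow (hNF0 _) (hub x) hp0.le
            _ = (1 + ε) ^ p * NE x ^ p := Real.mul_rpow h1.le (hNE0 x)
        have h5 : (0:ℝ) ≤ NF g ^ p := Real.rpow_nonneg (hNF0 g) p
        nlinarith [sq_nonneg ((1 + ε) ^ p - 1)]
      have h6 : NF f ≤ (1 + ε) * (NE x ^ p + (1 + ε) ^ p * NF g ^ p) ^ (1/p) := by
        calc NF f = (NF f ^ p) ^ (1/p) := (key _ (hNF0 _)).symm
          _ ≤ ((1 + ε) ^ p * (NE x ^ p + (1 + ε) ^ p * NF g ^ p)) ^ (1/p) :=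
              Real.rpow_le_rpow (Real.rpow_nonneg (hNF0 f) p) h3 (by positivity)
          _ = (((1 + ε) * (NE x ^ p + (1 + ε) ^ p * NF g ^ p) ^ (1/p)) ^ p) ^ (1/p) := by
              rw [Real.mul_rpow h1.le hr0, key' _ hinner]
          _ = (1 + ε) * (NE x ^ p + (1 + ε) ^ p * NF g ^ p) ^ (1/p) :=
              key _ (mul_nonneg h1.le hr0)
      rw [inv_mul_le_iff₀ h1]
      exact h6
  have hcorr : ∀ f : F, corrNorm NE NF ub p ε f = sInf (S f) := fun f => rfl
  refine ⟨fun f => ?_, fun x => ?_, fun f => ?_⟩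
  · constructor
    · rw [hcorr]
      exact le_csInf ⟨_, hSne f⟩ fun r hr => (hlow f r hr).2
    · rw [hcorr]
      exact csInf_le (hbdd f) (hSne f)
  · rw [hcorr]
    refine le_antisymm (csInf_le (hbdd _) ⟨x, 0, by simp, ?_⟩)
      (le_csInf ⟨_, hSne _⟩ fun r hr => ?_)
    · rw [(hNFdef 0).mpr rfl, Real.zero_rpow hpne, mul_zero, add_zero, key _ (hNE0 x)]
    · have := (hlow (ub x) r hr).1
      rwa [hpair] at this
  · rw [hcorr]
    exact le_csInf ⟨_, hSne f⟩ fun r hr => (hlow f r hr).1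
end

section
/- Splitting of approximate pairs through an amalgam (Lemma on W): let X, U be p-Banach spaces and f^† : X → U, f^‡ : U → X contractive operators with ‖f^‡ f^† − 1_X‖ ≤ ε. On W = X ⊕ U define ‖(x,y)‖ = inf { (‖x₀‖^p + ‖y₁‖^p + ε^p‖x₂‖^p)^(1/p) : (x,y) = (x₀,0) + (0,y₁) + (x₂, −f^†x₂) }. Then, with α^♭(x) = (x,0), β^♭(y) = (0,y), α^♯(x,y) = x + f^‡(y), β^♯(x,y) = y + f^†(x): (i) ‖(x,0)‖ = ‖x‖ and ‖(0,y)‖ = ‖y‖; (ii) α^♯α^♭ = 1_X, β^♯β^♭ = 1_U, f^† = β^♯α^♭, f^‡ = α^♯β^♭; (iii) ‖α^♯‖ ≤ 1 and ‖β^♯‖ ≤ 1; (iv) ‖α^♭ − β^♭ f^†‖ ≤ ε. -/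
open scoped BigOperators

/-- The quasinorm on `W = X ⊕ U` used in the splitting lemma:
`‖(x,y)‖ = inf {(‖x₀‖^p + ‖y₁‖^p + ε^p ‖x₂‖^p)^(1/p) : (x,y) = (x₀,0)+(0,y₁)+(x₂,−f† x₂)}`. -/
noncomputable def WNorm {X U : Type*} [AddCommGroup X] [Module ℝ X]
    [AddCommGroup U] [Module ℝ U]
    (NX : X → ℝ) (NU : U → ℝ) (fdag : X →ₗ[ℝ] U) (p ε : ℝ) (z : X × U) : ℝ :=
  sInf {r : ℝ | ∃ x0 : X, ∃ y1 : U, ∃ x2 : X,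
    z.1 = x0 + x2 ∧ z.2 = y1 - fdag x2 ∧
    r = (NX x0 ^ p + NU y1 ^ p + ε ^ p * NX x2 ^ p) ^ (1 / p)}

/-- Splitting of approximate pairs through an amalgam: if `f† : X → U` and
`f‡ : U → X` are contractive with `‖f‡ f† − 1‖ ≤ ε`, then on `W = X ⊕ U` with the
above quasinorm, `α = ⟨x ↦ (x,0), (x,y) ↦ x + f‡ y⟩` and `β = ⟨y ↦ (0,y), (x,y) ↦ y + f† x⟩`
are contractive pairs with `f† = β♯ α♭`, `f‡ = α♯ β♭` and `‖α♭ − β♭ f†‖ ≤ ε`. -/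
theorem splitting_through_amalgam (p ε : ℝ) (hp0 : 0 < p) (hp1 : p ≤ 1)
    (hε0 : 0 < ε) (hε1 : ε < 1)
    (X U : Type*) [AddCommGroup X] [Module ℝ X] [AddCommGroup U] [Module ℝ U]
    (NX : X → ℝ) (NU : U → ℝ)
    (hNX0 : ∀ x, 0 ≤ NX x) (hNXdef : ∀ x, NX x = 0 ↔ x = 0)
    (hNXhom : ∀ (c : ℝ) (x : X), NX (c • x) = |c| * NX x)
    (hNXp : ∀ x x', NX (x + x') ^ p ≤ NX x ^ p + NX x' ^ p)
    (hNU0 : ∀ y, 0 ≤ NU y) (hNUdef : ∀ y, NU y = 0 ↔ y = 0)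
    (hNUhom : ∀ (c : ℝ) (y : U), NU (c • y) = |c| * NU y)
    (hNUp : ∀ y y', NU (y + y') ^ p ≤ NU y ^ p + NU y' ^ p)
    (fdag : X →ₗ[ℝ] U) (fddag : U →ₗ[ℝ] X)
    (hfdag : ∀ x, NU (fdag x) ≤ NX x)
    (hfddag : ∀ y, NX (fddag y) ≤ NU y)
    (happrox : ∀ x, NX (fddag (fdag x) - x) ≤ ε * NX x) :
    -- (i) the canonical embeddings are isometric
    (∀ x : X, WNorm NX NU fdag p ε (x, 0) = NX x) ∧
    (∀ y : U, WNorm NX NU fdag p ε (0, y) = NU y) ∧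
    -- (ii) pair identities and factorizations
    (∀ x : X, x + fddag (0 : U) = x) ∧
    (∀ y : U, y + fdag (0 : X) = y) ∧
    (∀ x : X, (0 : U) + fdag x = fdag x) ∧
    (∀ y : U, (0 : X) + fddag y = fddag y) ∧
    -- (iii) the projections α♯(x,y) = x + f‡ y and β♯(x,y) = y + f† x are contractive
    (∀ z : X × U, NX (z.1 + fddag z.2) ≤ WNorm NX NU fdag p ε z) ∧
    (∀ z : X × U, NU (z.2 + fdag z.1) ≤ WNorm NX NU fdag p ε z) ∧
    -- (iv) ‖α♭ − β♭ f†‖ ≤ ε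
    (∀ x : X, WNorm NX NU fdag p ε ((x, 0) - (0, fdag x)) ≤ ε * NX x) := by
  classical
  have hp : p ≠ 0 := hp0.ne'
  have hNX0' : NX 0 = 0 := (hNXdef 0).mpr rfl
  have hNU0' : NU 0 = 0 := (hNUdef 0).mpr rfl
  have hNXneg : ∀ x : X, NX (-x) = NX x := by
    intro x
    have := hNXhom (-1) x
    simpa using this
  -- (a^p)^(1/p) = a for a ≥ 0
  have hrp : ∀ a : ℝ, 0 ≤ a → (a ^ p) ^ (1 / p) = a := by
    intro a ha
    rw [← Real.rpow_mul ha, mul_one_div, div_self hp, Real.rpow_one]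
  -- a ≤ b^(1/p) from a^p ≤ b, a ≥ 0
  have hmono : ∀ a b : ℝ, 0 ≤ a → a ^ p ≤ b → a ≤ b ^ (1 / p) := by
    intro a b ha h
    have hb : (0:ℝ) ≤ b := le_trans (Real.rpow_nonneg ha p) h
    calc a = (a ^ p) ^ (1 / p) := (hrp a ha).symm
      _ ≤ b ^ (1 / p) := Real.rpow_le_rpow (Real.rpow_nonneg ha p) h (by positivity)
  set S : X × U → Set ℝ := fun z => {r : ℝ | ∃ x0 : X, ∃ y1 : U, ∃ x2 : X,
    z.1 = x0 + x2 ∧ z.2 = y1 - fdag x2 ∧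
    r = (NX x0 ^ p + NU y1 ^ p + ε ^ p * NX x2 ^ p) ^ (1 / p)} with hS
  have hW : ∀ z, WNorm NX NU fdag p ε z = sInf (S z) := fun z => rfl
  have hbdd : ∀ z, BddBelow (S z) := by
    intro z
    refine ⟨0, ?_⟩
    rintro r ⟨x0, y1, x2, h1, h2, rfl⟩
    exact Real.rpow_nonneg (add_nonneg (add_nonneg (Real.rpow_nonneg (hNX0 _) p)
      (Real.rpow_nonneg (hNU0 _) p))
      (mul_nonneg (Real.rpow_nonneg hε0.le p) (Real.rpow_nonneg (hNX0 _) p))) _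
  have hαkey : ∀ z : X × U, ∀ r ∈ S z, NX (z.1 + fddag z.2) ≤ r := by
    rintro z r ⟨x0, y1, x2, h1, h2, rfl⟩
    refine hmono _ _ (hNX0 _) ?_
    have harg : z.1 + fddag z.2 = x0 + (fddag y1 + -(fddag (fdag x2) - x2)) := by
      rw [h1, h2, map_sub]
      abel
    rw [harg]
    calc NX (x0 + (fddag y1 + -(fddag (fdag x2) - x2))) ^ p
        ≤ NX x0 ^ p + NX (fddag y1 + -(fddag (fdag x2) - x2)) ^ p := hNXp _ _
      _ ≤ NX x0 ^ p + (NX (fddag y1) ^ p + NX (-(fddag (fdag x2) - x2)) ^ p) := by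
          have := hNXp (fddag y1) (-(fddag (fdag x2) - x2))
          linarith
      _ ≤ NX x0 ^ p + (NU y1 ^ p + ε ^ p * NX x2 ^ p) := by
          have h3 : NX (fddag y1) ^ p ≤ NU y1 ^ p :=
            Real.rpow_le_rpow (hNX0 _) (hfddag y1) hp0.le
          have h4 : NX (-(fddag (fdag x2) - x2)) ^ p ≤ (ε * NX x2) ^ p := by
            rw [hNXneg]
            exact Real.rpow_le_rpow (hNX0 _) (happrox x2) hp0.le
          rw [Real.mul_rpow hε0.le (hNX0 x2)] at h4
          linarith
      _ = NX x0 ^ p + NU y1 ^ p + ε ^ p * NX x2 ^ p := by ring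
  have hβkey : ∀ z : X × U, ∀ r ∈ S z, NU (z.2 + fdag z.1) ≤ r := by
    rintro z r ⟨x0, y1, x2, h1, h2, rfl⟩
    refine hmono _ _ (hNU0 _) ?_
    have harg : z.2 + fdag z.1 = y1 + fdag x0 := by
      rw [h1, h2, map_add]
      abel
    rw [harg]
    have h3 : NU (fdag x0) ^ p ≤ NX x0 ^ p :=
      Real.rpow_le_rpow (hNU0 _) (hfdag x0) hp0.le
    have h5 : NU (y1 + fdag x0) ^ p ≤ NU y1 ^ p + NU (fdag x0) ^ p := hNUp _ _
    have h6 : (0:ℝ) ≤ ε ^ p * NX x2 ^ p := mul_nonneg (Real.rpow_nonneg hε0.le p) (Real.rpow_nonneg (hNX0 x2) p)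
    linarith
  have hα : ∀ z : X × U, NX (z.1 + fddag z.2) ≤ WNorm NX NU fdag p ε z := by
    intro z
    rw [hW]
    exact le_csInf ⟨(NX z.1 ^ p + NU z.2 ^ p + ε ^ p * NX (0:X) ^ p) ^ (1 / p),
      z.1, z.2, 0, by simp⟩ (hαkey z)
  have hβ : ∀ z : X × U, NU (z.2 + fdag z.1) ≤ WNorm NX NU fdag p ε z := by
    intro z
    rw [hW]
    exact le_csInf ⟨(NX z.1 ^ p + NU z.2 ^ p + ε ^ p * NX (0:X) ^ p) ^ (1 / p),
      z.1, z.2, 0, by simp⟩ (hβkey z)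
  refine ⟨?_, ?_, fun x => by simp, fun y => by simp, fun x => by simp, fun y => by simp,
    hα, hβ, ?_⟩
  · intro x
    refine le_antisymm ?_ ?_
    · rw [hW]
      have hmem : NX x ∈ S (x, (0:U)) := by
        refine ⟨x, 0, 0, by simp, by simp, ?_⟩
        rw [hNX0', hNU0', Real.zero_rpow hp, mul_zero, add_zero, add_zero, hrp _ (hNX0 x)]
      exact csInf_le (hbdd _) hmem
    · have := hα (x, 0)
      simpa using this
  · intro y
    refine le_antisymm ?_ ?_
    · rw [hW]
      have hmem : NU y ∈ S ((0:X), y) := by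
        refine ⟨0, y, 0, by simp, by simp, ?_⟩
        rw [hNX0', Real.zero_rpow hp, mul_zero, add_zero, zero_add, hrp _ (hNU0 y)]
      exact csInf_le (hbdd _) hmem
    · have := hβ (0, y)
      simpa using this
  · intro x
    rw [hW]
    have hmem : ε * NX x ∈ S ((x, 0) - (0, fdag x)) := by
      refine ⟨0, 0, x, by simp, by simp, ?_⟩
      rw [hNX0', hNU0', Real.zero_rpow hp, zero_add, zero_add,
        ← Real.mul_rpow hε0.le (hNX0 x), hrp _ (mul_nonneg hε0.le (hNX0 x))]
    exact csInf_le (hbdd _) hmem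
end

section
/- Haydon-type separation: let E be the Euclidean plane, and for each unit vector u ∈ E define the p-norm |(x,t)|_u = max(‖x‖₂, (|⟨x,u⟩|^p + |t|^p)^(1/p)) on E × ℝ. Suppose X is a p-Banach space containing E isometrically, and for each u in the positive quarter S₊ of the unit circle there is e_u ∈ X with ‖e_u‖ = 1 such that ‖x + t e_u‖ = |(x,t)|_u for all (x,t). Then ‖e_u − e_v‖ ≥ 1 whenever u, v ∈ S₊ are distinct. -/
open scoped BigOperators

set_option maxHeartbeats 1000000 in
/-- Haydon-type separation: if `X` contains, for two distinct unit vectors `u, v` of the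
positive quarter of the Euclidean circle, isometric copies of the three-dimensional spaces
`F_u` and `F_v` (with `|(x,t)|_u = max(‖x‖₂, (|⟨x,u⟩|^p + |t|^p)^{1/p})`) extending a common
isometric copy of the Euclidean plane, then the corresponding vectors `e_u` and `e_v`
satisfy `‖e_u − e_v‖ ≥ 1`. -/
theorem haydon_separation (p : ℝ) (hp0 : 0 < p) (hp1 : p ≤ 1)
    (X : Type*) [AddCommGroup X] [Module ℝ X]
    (NX : X → ℝ)
    (hNX0 : ∀ x, 0 ≤ NX x) (hNXdef : ∀ x, NX x = 0 ↔ x = 0)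
    (hNXhom : ∀ (c : ℝ) (x : X), NX (c • x) = |c| * NX x)
    (hNXp : ∀ x x', NX (x + x') ^ p ≤ NX x ^ p + NX x' ^ p)
    (ι : (ℝ × ℝ) →ₗ[ℝ] X)
    (u v : ℝ × ℝ)
    (hu : Real.sqrt (u.1 ^ 2 + u.2 ^ 2) = 1) (hv : Real.sqrt (v.1 ^ 2 + v.2 ^ 2) = 1)
    (hupos : 0 < u.1 ∧ 0 < u.2) (hvpos : 0 < v.1 ∧ 0 < v.2)
    (huv : u ≠ v)
    (eu ev : X) (heu : NX eu = 1) (hev : NX ev = 1)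
    (hisomu : ∀ (x : ℝ × ℝ) (t : ℝ),
      NX (ι x + t • eu) =
        max (Real.sqrt (x.1 ^ 2 + x.2 ^ 2))
          ((|x.1 * u.1 + x.2 * u.2| ^ p + |t| ^ p) ^ (1 / p)))
    (hisomv : ∀ (x : ℝ × ℝ) (t : ℝ),
      NX (ι x + t • ev) =
        max (Real.sqrt (x.1 ^ 2 + x.2 ^ 2))
          ((|x.1 * v.1 + x.2 * v.2| ^ p + |t| ^ p) ^ (1 / p))) :
    1 ≤ NX (eu - ev) := by

  obtain ⟨hu1, hu2⟩ := hupos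
  obtain ⟨hv1, hv2⟩ := hvpos
  have hu' : u.1 ^ 2 + u.2 ^ 2 = 1 := by
    have h := congrArg (· ^ 2) hu
    simpa [Real.sq_sqrt (by positivity : (0:ℝ) ≤ u.1 ^ 2 + u.2 ^ 2)] using h
  have hv' : v.1 ^ 2 + v.2 ^ 2 = 1 := by
    have h := congrArg (· ^ 2) hv
    simpa [Real.sq_sqrt (by positivity : (0:ℝ) ≤ v.1 ^ 2 + v.2 ^ 2)] using h
  set a := u.1 * v.1 + u.2 * v.2 with ha
  have ha0 : 0 < a := add_pos (mul_pos hu1 hv1) (mul_pos hu2 hv2)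
  have ha1 : a < 1 := by
    have hne : 0 < (u.1 - v.1) ^ 2 + (u.2 - v.2) ^ 2 := by
      rcases eq_or_ne u.1 v.1 with h1 | h1
      · rcases eq_or_ne u.2 v.2 with h2 | h2
        · exact absurd (Prod.ext h1 h2) huv
        · have h3 : u.2 - v.2 ≠ 0 := sub_ne_zero.mpr h2
          have h4 : 0 < (u.2 - v.2) ^ 2 := by positivity
          nlinarith [sq_nonneg (u.1 - v.1)]
      · have h3 : u.1 - v.1 ≠ 0 := sub_ne_zero.mpr h1
        have h4 : 0 < (u.1 - v.1) ^ 2 := by positivity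
        nlinarith [sq_nonneg (u.2 - v.2)]
    nlinarith
  have hap : a ^ p < 1 := Real.rpow_lt_one ha0.le ha1 hp0
  have hap0 : 0 < a ^ p := Real.rpow_pos_of_pos ha0 p
  set b := 1 / (1 - a ^ p) with hb
  have hb0 : 0 < b := by
    apply div_pos one_pos; linarith
  set s := b ^ (1 / p) with hs
  have hs0 : 0 < s := Real.rpow_pos_of_pos hb0 _
  have hsp : s ^ p = b := by
    rw [hs, ← Real.rpow_mul hb0.le, one_div, inv_mul_cancel₀ hp0.ne', Real.rpow_one]
  set x : ℝ × ℝ := (s * u.1, s * u.2) with hx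
  have hxnorm : Real.sqrt (x.1 ^ 2 + x.2 ^ 2) = s := by
    have h1 : x.1 ^ 2 + x.2 ^ 2 = s ^ 2 := by
      simp only [hx]
      nlinarith
    rw [h1, Real.sqrt_sq hs0.le]
  have hinnu : x.1 * u.1 + x.2 * u.2 = s := by
    simp only [hx]
    nlinarith
  have hinnv : x.1 * v.1 + x.2 * v.2 = s * a := by
    simp only [hx, ha]; ring
  have hsps : (s ^ p) ^ (1 / p) = s := by
    rw [← Real.rpow_mul hs0.le, mul_one_div, div_self hp0.ne', Real.rpow_one]
  clear_value a b s x
  have hNu : NX (ι x + (1 : ℝ) • eu) = (s ^ p + 1) ^ (1 / p) := by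
    rw [hisomu x 1, hxnorm, hinnu, abs_of_pos hs0, abs_one, Real.one_rpow]
    apply max_eq_right
    calc s = (s ^ p) ^ (1 / p) := hsps.symm
      _ ≤ (s ^ p + 1) ^ (1 / p) :=
        Real.rpow_le_rpow (Real.rpow_nonneg hs0.le p) (by linarith) (by positivity)
  have hNv : NX (ι x + (1 : ℝ) • ev) = s := by
    rw [hisomv x 1, hxnorm, hinnv, abs_of_pos (mul_pos hs0 ha0), abs_one, Real.one_rpow,
      Real.mul_rpow hs0.le ha0.le, hsp]
    have hba : b * a ^ p + 1 = b := by
      have hne : (1 : ℝ) - a ^ p ≠ 0 := by linarith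
      rw [hb, div_mul_eq_mul_div, one_mul, div_add_one hne, add_sub_cancel]
    rw [hba, ← hsp, hsps, max_self]
  have htri := hNXp (ι x + (1 : ℝ) • ev) (eu - ev)
  have hsum : ι x + (1 : ℝ) • eu = (ι x + (1 : ℝ) • ev) + (eu - ev) := by
    rw [one_smul, one_smul, add_assoc, add_sub_cancel]
  rw [← hsum, hNu, hNv] at htri
  have hL : ((s ^ p + 1) ^ (1 / p)) ^ p = s ^ p + 1 := by
    rw [← Real.rpow_mul (by positivity), one_div, inv_mul_cancel₀ hp0.ne', Real.rpow_one]
  rw [hL] at htri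
  by_contra h
  push_neg at h
  have hlt : NX (eu - ev) ^ p < 1 := Real.rpow_lt_one (hNX0 _) h hp0
  linarith
end
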